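/- Let k ≥ 3 and D ≥ 1 be integers and let C be a binary [N,k,D] Griesmer code (i.e., N = g(k,D)). Then C is self-orthogonal if and only if C is doubly-even, i.e., the weight of every codeword of C is divisible by 4. -/

import Mathlib

open Finset

/-- Hamming weight of a binary vector. -/
def wt {ι : Type*} [Fintype ι] (x : ι → ZMod 2) : ℕ :=
  (Finset.univ.filter fun i => x i ≠ 0).card

/-- A binary linear code is self-orthogonal if any two codewords are orthogonal. -/
def SelfOrthogonal {ι : Type*} [Fintype ι] (C : Submodule (ZMod 2) (ι → ZMod 2)) : Prop :=
  ∀ x ∈ C, ∀ y ∈ C, ∑ i, x i * y i = 0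

/-- `C` has minimum distance exactly `d`: some nonzero codeword has weight `d`,
and every nonzero codeword has weight at least `d`. -/
def HasMinDist {ι : Type*} [Fintype ι] (C : Submodule (ZMod 2) (ι → ZMod 2)) (d : ℕ) : Prop :=
  (∃ x ∈ C, x ≠ 0 ∧ wt x = d) ∧ ∀ x ∈ C, x ≠ 0 → d ≤ wt x

/-- The Griesmer function `g(k,d) = ∑_{i=0}^{k-1} ⌈d/2^i⌉` (ceiling division). -/
def griesmerBound (k d : ℕ) : ℕ :=
  ∑ i ∈ Finset.range k, (d + 2 ^ i - 1) / 2 ^ i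

/-! ### Arithmetic lemmas about ceiling division and the Griesmer function -/

lemma cdiv_le_iff {a d x : ℕ} (ha : 0 < a) : (d + a - 1) / a ≤ x ↔ d ≤ a * x := by
  rw [Nat.div_le_iff_le_mul_add_pred ha]; omega

lemma cdiv_mono {a d d' : ℕ} (h : d ≤ d') : (d + a - 1) / a ≤ (d' + a - 1) / a :=
  Nat.div_le_div_right (by omega)

lemma cdiv_pos {a d : ℕ} (ha : 0 < a) (hd : 0 < d) : 0 < (d + a - 1) / a := by
  rcases Nat.eq_zero_or_pos ((d + a - 1) / a) with h | h
  · exfalso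
    have := (cdiv_le_iff (x := 0) ha).mp (le_of_eq h)
    omega
  · exact h

lemma cdiv_cdiv {a b d : ℕ} (ha : 0 < a) (hb : 0 < b) :
    ((d + a - 1) / a + b - 1) / b = (d + a * b - 1) / (a * b) := by
  have h1 : ∀ x, (((d + a - 1) / a + b - 1) / b ≤ x ↔ d ≤ a * (b * x)) := fun x =>
    (cdiv_le_iff hb).trans (cdiv_le_iff ha)
  have h2 : ∀ x, ((d + a * b - 1) / (a * b) ≤ x ↔ d ≤ a * b * x) := fun _ =>
    cdiv_le_iff (Nat.mul_pos ha hb)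
  apply le_antisymm
  · rw [h1]
    rw [← mul_assoc]
    exact (h2 _).mp le_rfl
  · rw [h2]
    rw [mul_assoc]
    exact (h1 _).mp le_rfl

lemma gb_zero (d : ℕ) : griesmerBound 0 d = 0 := by simp [griesmerBound]

lemma gb_succ (k d : ℕ) :
    griesmerBound (k + 1) d = griesmerBound k d + (d + 2 ^ k - 1) / 2 ^ k :=
  Finset.sum_range_succ _ _

lemma gb_mono {k d d' : ℕ} (h : d ≤ d') : griesmerBound k d ≤ griesmerBound k d' :=
  Finset.sum_le_sum fun _ _ => cdiv_mono h

lemma gb_rec (k d : ℕ) :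
    griesmerBound (k + 1) d = d + griesmerBound k ((d + 2 - 1) / 2) := by
  rw [griesmerBound, Finset.sum_range_succ', griesmerBound]
  have h0 : (d + 2 ^ 0 - 1) / 2 ^ 0 = d := by norm_num
  rw [h0, add_comm]
  congr 1
  refine Finset.sum_congr rfl fun i _ => ?_
  rw [cdiv_cdiv (by norm_num) (pow_pos (by norm_num) i), pow_succ, mul_comm (2 ^ i) 2]

lemma gb_ge_d {k d : ℕ} (hk : 1 ≤ k) : d ≤ griesmerBound k d := by
  have h0 : (d + 2 ^ 0 - 1) / 2 ^ 0 = d := by norm_num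
  calc d = (d + 2 ^ 0 - 1) / 2 ^ 0 := h0.symm
    _ ≤ _ := Finset.single_le_sum (f := fun i => (d + 2 ^ i - 1) / 2 ^ i)
        (fun _ _ => Nat.zero_le _) (Finset.mem_range.mpr (by omega))

lemma sum_two_pow (k : ℕ) : ∑ i ∈ Finset.range k, 2 ^ i = 2 ^ k - 1 := by
  induction k with
  | zero => simp
  | succ k ih =>
    rw [Finset.sum_range_succ, ih]
    have : 1 ≤ 2 ^ k := Nat.one_le_two_pow
    have : 2 ^ (k + 1) = 2 * 2 ^ k := by rw [pow_succ]; ring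
    omega

lemma gb_counting {k d : ℕ} (hk : 2 ≤ k) (hd : 1 ≤ d) :
    (2 ^ k - 2) * ((d + 2 ^ (k - 1) - 1) / 2 ^ (k - 1) - 1)
      + (d + 2 ^ (k - 1) - 1) / 2 ^ (k - 1) < griesmerBound k d := by
  set A := (d + 2 ^ (k - 1) - 1) / 2 ^ (k - 1) with hA
  have hA1 : 1 ≤ A := cdiv_pos (pow_pos (by norm_num) _) hd
  have hdlow : 2 ^ (k - 1) * (A - 1) + 1 ≤ d := by
    by_contra hcon
    push_neg at hcon
    have : A ≤ A - 1 := (cdiv_le_iff (pow_pos (by norm_num) _)).mpr (by omega)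
    omega
  have hterm : ∀ i ∈ Finset.range k,
      2 ^ (k - 1 - i) * (A - 1) + 1 ≤ (d + 2 ^ i - 1) / 2 ^ i := by
    intro i hi
    rw [Finset.mem_range] at hi
    have hik : i ≤ k - 1 := by omega
    have hsplit : 2 ^ (k - 1) = 2 ^ i * 2 ^ (k - 1 - i) := by
      rw [← pow_add]; congr 1; omega
    have hnum : 2 ^ (k - 1) * (A - 1) + 1 + 2 ^ i - 1
        = 2 ^ i * (2 ^ (k - 1 - i) * (A - 1) + 1) := by
      rw [Nat.mul_add, mul_one, hsplit, mul_assoc]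
      have : 1 ≤ 2 ^ i := Nat.one_le_two_pow
      omega
    have key : (2 ^ (k - 1) * (A - 1) + 1 + 2 ^ i - 1) / 2 ^ i
        = 2 ^ (k - 1 - i) * (A - 1) + 1 := by
      rw [hnum, Nat.mul_div_cancel_left _ (pow_pos (by norm_num) i)]
    calc 2 ^ (k - 1 - i) * (A - 1) + 1 = _ := key.symm
      _ ≤ (d + 2 ^ i - 1) / 2 ^ i := cdiv_mono hdlow
  have hsum : ∑ i ∈ Finset.range k, (2 ^ (k - 1 - i) * (A - 1) + 1) ≤ griesmerBound k d :=
    Finset.sum_le_sum hterm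
  have hgeom : ∑ i ∈ Finset.range k, 2 ^ (k - 1 - i) = 2 ^ k - 1 := by
    have := Finset.sum_range_reflect (fun i => (2 : ℕ) ^ i) k
    -- ∑ j in range k, 2^(k - 1 - j) = ∑ j in range k, 2^j
    rw [this, sum_two_pow]
  have hsum2 : ∑ i ∈ Finset.range k, (2 ^ (k - 1 - i) * (A - 1) + 1)
      = (2 ^ k - 1) * (A - 1) + k := by
    rw [Finset.sum_add_distrib, ← Finset.sum_mul, hgeom, Finset.sum_const, Finset.card_range,
      smul_eq_mul, mul_one]
  have hP : 2 ≤ 2 ^ k := by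
    calc (2:ℕ) = 2 ^ 1 := (pow_one 2).symm
    _ ≤ 2 ^ k := Nat.pow_le_pow_right (by norm_num) (by omega)
  have hexp : (2 ^ k - 1) * (A - 1) = (2 ^ k - 2) * (A - 1) + (A - 1) := by
    have h21 : 2 ^ k - 1 = (2 ^ k - 2) + 1 := by omega
    rw [h21, add_mul, one_mul]
  omega

lemma z2cases : ∀ c : ZMod 2, c = 0 ∨ c = 1 := by decide

section Codes

universe u
variable {U : Type u} [AddCommGroup U] [Module (ZMod 2) U]

/-- weight function attached to a multiplicity function on the dual space -/
def wm [Fintype (Module.Dual (ZMod 2) U)]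
    (m : Module.Dual (ZMod 2) U → ℕ) (u : U) : ℕ :=
  ∑ φ ∈ Finset.univ.filter (fun φ : Module.Dual (ZMod 2) U => φ u = 1), m φ

lemma ker_le_ker_cases {v φ : Module.Dual (ZMod 2) U} (hv : v ≠ 0)
    (h : ∀ u, v u = 0 → φ u = 0) : φ = 0 ∨ φ = v := by
  obtain ⟨u₁, hu₁⟩ : ∃ u, v u ≠ 0 := by
    by_contra hc
    push_neg at hc
    exact hv (LinearMap.ext fun u => hc u)
  have hv1 : v u₁ = 1 := by
    rcases z2cases (v u₁) with h' | h'
    · exact absurd h' hu₁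
    · exact h'
  have key : ∀ u, φ u = v u * φ u₁ := by
    intro u
    have hmem : v (u + v u • u₁) = 0 := by
      rw [map_add, map_smul, hv1, smul_eq_mul, mul_one]
      rcases z2cases (v u) with h' | h' <;> rw [h'] <;> decide
    have h0 := h _ hmem
    rw [map_add, map_smul, smul_eq_mul] at h0
    have h2 : ∀ a b : ZMod 2, a + b = 0 → a = b := by decide
    exact h2 _ _ h0
  rcases z2cases (φ u₁) with h' | h'
  · left
    apply LinearMap.ext
    intro u
    rw [key u, h', mul_zero]
    rfl
  · right
    apply LinearMap.ext
    intro u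
    rw [key u, h', mul_one]

lemma exists_one_of_ne_zero {v : Module.Dual (ZMod 2) U} (hv : v ≠ 0) :
    ∃ u, v u = 1 := by
  obtain ⟨u₁, hu₁⟩ : ∃ u, v u ≠ 0 := by
    by_contra hc
    push_neg at hc
    exact hv (LinearMap.ext fun u => hc u)
  rcases z2cases (v u₁) with h' | h'
  · exact absurd h' hu₁
  · exact ⟨u₁, h'⟩

lemma finrank_ker_add_one [FiniteDimensional (ZMod 2) U]
    {v : Module.Dual (ZMod 2) U} (hv : v ≠ 0) :
    Module.finrank (ZMod 2) (LinearMap.ker v) + 1 = Module.finrank (ZMod 2) U := by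
  have hr := LinearMap.finrank_range_add_finrank_ker v
  have hsurj : LinearMap.range v = ⊤ := by
    rw [LinearMap.range_eq_top]
    intro c
    obtain ⟨u₁, hu₁⟩ := exists_one_of_ne_zero hv
    rcases z2cases c with rfl | rfl
    · exact ⟨0, map_zero v⟩
    · exact ⟨u₁, hu₁⟩
  rw [hsurj, finrank_top, Module.finrank_self] at hr
  omega

/-- shortening of a multiplicity function at a nonzero functional `v` -/
def shorten [Fintype (Module.Dual (ZMod 2) U)]
    [DecidableEq (Module.Dual (ZMod 2) U)]
    (m : Module.Dual (ZMod 2) U → ℕ) (v : Module.Dual (ZMod 2) U)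
    [Fintype (Module.Dual (ZMod 2) (LinearMap.ker v))]
    [DecidableEq (Module.Dual (ZMod 2) (LinearMap.ker v))] :
    Module.Dual (ZMod 2) (LinearMap.ker v) → ℕ :=
  fun ψ => if ψ = 0 then 0 else
    ∑ φ ∈ Finset.univ.filter
      (fun φ : Module.Dual (ZMod 2) U => φ.domRestrict (LinearMap.ker v) = ψ), m φ

variable [Fintype (Module.Dual (ZMod 2) U)] [DecidableEq (Module.Dual (ZMod 2) U)]

lemma shorten_zero (m : Module.Dual (ZMod 2) U → ℕ) (v : Module.Dual (ZMod 2) U)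
    [Fintype (Module.Dual (ZMod 2) (LinearMap.ker v))]
    [DecidableEq (Module.Dual (ZMod 2) (LinearMap.ker v))] :
    shorten m v 0 = 0 := by simp [shorten]

lemma shorten_sum (m : Module.Dual (ZMod 2) U → ℕ) {v : Module.Dual (ZMod 2) U}
    [Fintype (Module.Dual (ZMod 2) (LinearMap.ker v))]
    [DecidableEq (Module.Dual (ZMod 2) (LinearMap.ker v))]
    (hv : v ≠ 0) (hm0 : m 0 = 0) :
    ∑ ψ, shorten m v ψ + m v = ∑ φ, m φ := by
  have h1 : ∑ ψ, shorten m v ψ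
      = ∑ ψ ∈ univ.filter (fun ψ : Module.Dual (ZMod 2) (LinearMap.ker v) => ψ ≠ 0),
          ∑ φ ∈ univ.filter
            (fun φ : Module.Dual (ZMod 2) U => φ.domRestrict (LinearMap.ker v) = ψ), m φ := by
    rw [Finset.sum_filter]
    refine Finset.sum_congr rfl fun ψ _ => ?_
    by_cases hψ : ψ = 0 <;> simp [shorten, hψ]
  rw [h1, Finset.sum_fiberwise_eq_sum_filter]
  have h3 := Finset.sum_filter_add_sum_filter_not Finset.univ
    (fun φ : Module.Dual (ZMod 2) U =>
      φ.domRestrict (LinearMap.ker v) ∈ univ.filter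
        (fun ψ : Module.Dual (ZMod 2) (LinearMap.ker v) => ψ ≠ 0)) m
  have h4 : univ.filter (fun φ : Module.Dual (ZMod 2) U =>
      ¬ (φ.domRestrict (LinearMap.ker v) ∈ univ.filter
        (fun ψ : Module.Dual (ZMod 2) (LinearMap.ker v) => ψ ≠ 0))) = {0, v} := by
    ext φ
    simp only [mem_filter, mem_univ, true_and, not_not, mem_insert, mem_singleton, not_not]
    constructor
    · intro h0
      apply ker_le_ker_cases hv
      intro u hu
      have : φ.domRestrict (LinearMap.ker v) ⟨u, LinearMap.mem_ker.mpr hu⟩ = 0 := by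
        rw [h0]; rfl
      exact this
    · rintro (rfl | rfl)
      · rfl
      · apply LinearMap.ext
        intro x
        simpa using LinearMap.mem_ker.mp x.2
  rw [h4] at h3
  rw [Finset.sum_pair (show (0 : Module.Dual (ZMod 2) U) ≠ v from fun e => hv e.symm)] at h3
  omega

lemma shorten_w (m : Module.Dual (ZMod 2) U → ℕ) {v : Module.Dual (ZMod 2) U}
    [Fintype (Module.Dual (ZMod 2) (LinearMap.ker v))]
    [DecidableEq (Module.Dual (ZMod 2) (LinearMap.ker v))]
    (u : LinearMap.ker v) :
    wm (shorten m v) u = wm m (u : U) := by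
  rw [wm, wm]
  have h1 : ∀ ψ ∈ univ.filter
      (fun ψ : Module.Dual (ZMod 2) (LinearMap.ker v) => ψ u = 1),
      shorten m v ψ = ∑ φ ∈ univ.filter
        (fun φ : Module.Dual (ZMod 2) U => φ.domRestrict (LinearMap.ker v) = ψ), m φ := by
    intro ψ hψ
    simp only [mem_filter, mem_univ, true_and] at hψ
    have hψ0 : ψ ≠ 0 := by
      intro h
      rw [h] at hψ
      simp at hψ
    simp [shorten, hψ0]
  rw [Finset.sum_congr rfl h1, Finset.sum_fiberwise_eq_sum_filter]
  refine Finset.sum_congr ?_ (fun _ _ => rfl)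
  apply Finset.filter_congr
  intro φ _
  simp [LinearMap.domRestrict_apply]

end Codes



lemma pointG : ∀ (a b : ZMod 2) (n : ℕ),
    (if a = 1 then n else 0) + (if a + b = 1 then n else 0)
      = 2 * (if b = 0 ∧ a = 1 then n else 0) + (if b = 1 then n else 0) := by
  intro a b n
  rcases z2cases a with rfl | rfl <;> rcases z2cases b with rfl | rfl <;>
    simp [show (0:ZMod 2) + 0 = 0 by decide, show (0:ZMod 2) + 1 = 1 by decide,
      show (1:ZMod 2) + 0 = 1 by decide, show (1:ZMod 2) + 1 = 0 by decide,
      show (0:ZMod 2) ≠ 1 by decide, show (1:ZMod 2) ≠ 0 by decide] <;> omega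

lemma griesmer_lb : ∀ (k : ℕ) (U : Type u) [AddCommGroup U] [Module (ZMod 2) U]
    [FiniteDimensional (ZMod 2) U] [Fintype (Module.Dual (ZMod 2) U)],
    Module.finrank (ZMod 2) U = k →
    ∀ (m : Module.Dual (ZMod 2) U → ℕ), m 0 = 0 →
    ∀ (d : ℕ), (∀ u : U, u ≠ 0 → d ≤ wm m u) →
    griesmerBound k d ≤ ∑ φ, m φ := by
  intro k
  induction k with
  | zero =>
    intro U _ _ _ _ hU m hm0 d hw
    simp [gb_zero]
  | succ k ih =>
    intro U _ _ _ _ hU m hm0 d hw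
    classical
    haveI : Finite U := Module.finite_of_finite (ZMod 2)
    haveI : Fintype U := Fintype.ofFinite U
    -- pick a nonzero vector of minimal weight
    have hnt : Nontrivial U := by
      apply Module.nontrivial_of_finrank_pos (R := ZMod 2)
      omega
    have hne : (univ.filter (fun u : U => u ≠ 0)).Nonempty := by
      obtain ⟨u, hu⟩ := exists_ne (0 : U)
      exact ⟨u, by simp [hu]⟩
    obtain ⟨u₀, hu₀mem, hmin⟩ := Finset.exists_min_image _ (wm m) hne
    simp only [mem_filter, mem_univ, true_and] at hu₀mem
    set D := wm m u₀ with hD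
    have hdD : d ≤ D := hw u₀ hu₀mem
    set W : Submodule (ZMod 2) U := (ZMod 2) ∙ u₀ with hW
    have hmemW : ∀ x : U, x ∈ W ↔ x = 0 ∨ x = u₀ := by
      intro x
      rw [hW, Submodule.mem_span_singleton]
      constructor
      · rintro ⟨c, rfl⟩
        rcases z2cases c with rfl | rfl
        · left; simp
        · right; simp
      · rintro (rfl | rfl)
        · exact ⟨0, by simp⟩
        · exact ⟨1, one_smul _ _⟩
    haveI : FiniteDimensional (ZMod 2) (U ⧸ W) := inferInstance
    haveI : Finite (Module.Dual (ZMod 2) (U ⧸ W)) := Module.finite_of_finite (ZMod 2)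
    haveI : Fintype (Module.Dual (ZMod 2) (U ⧸ W)) :=
      Fintype.ofFinite _
    have hrank : Module.finrank (ZMod 2) (U ⧸ W) = k := by
      have h1 := Submodule.finrank_quotient_add_finrank W
      have h2 : Module.finrank (ZMod 2) W = 1 := by
        rw [hW]
        exact finrank_span_singleton hu₀mem
      omega
    set m' : Module.Dual (ZMod 2) (U ⧸ W) → ℕ := fun ψ => m (ψ.comp W.mkQ) with hm'
    have hm'0 : m' 0 = 0 := by
      have : (0 : Module.Dual (ZMod 2) (U ⧸ W)).comp W.mkQ = 0 := by
        apply LinearMap.ext; intro x; rfl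
      simp [hm', this, hm0]
    have hmku₀ : W.mkQ u₀ = 0 := by
      rw [Submodule.mkQ_apply, Submodule.Quotient.mk_eq_zero]
      exact (hmemW u₀).mpr (Or.inr rfl)
    -- reindexing: total sum
    have ha : ∑ ψ, m' ψ
        = ∑ φ ∈ univ.filter (fun φ : Module.Dual (ZMod 2) U => φ u₀ = 0), m φ := by
      refine Finset.sum_bij'
        (fun (ψ : Module.Dual (ZMod 2) (U ⧸ W)) (_ : ψ ∈ univ) => ψ.comp W.mkQ)
        (fun (φ : Module.Dual (ZMod 2) U) (hφ) =>
          W.liftQ φ (Submodule.span_le.mpr (Set.singleton_subset_iff.mpr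
            (LinearMap.mem_ker.mpr (by simpa using (Finset.mem_filter.mp hφ).2)))))
        ?_ ?_ ?_ ?_ ?_
      · intro ψ _
        simp only [mem_filter, mem_univ, true_and, LinearMap.comp_apply]
        rw [hmku₀, map_zero]
      · intro φ _
        exact mem_univ _
      · intro ψ _
        apply LinearMap.ext
        intro x
        obtain ⟨y, rfl⟩ := W.mkQ_surjective x
        rfl
      · intro φ _
        exact Submodule.liftQ_mkQ _ _ _
      · intro ψ _
        rfl
    -- reindexing: weights
    have hb : ∀ v : U, wm m' (W.mkQ v)
        = ∑ φ ∈ univ.filter (fun φ : Module.Dual (ZMod 2) U => φ u₀ = 0 ∧ φ v = 1), m φ := by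
      intro v
      rw [wm]
      refine Finset.sum_bij'
        (fun (ψ : Module.Dual (ZMod 2) (U ⧸ W)) (_) => ψ.comp W.mkQ)
        (fun (φ : Module.Dual (ZMod 2) U) (hφ) =>
          W.liftQ φ (Submodule.span_le.mpr (Set.singleton_subset_iff.mpr
            (LinearMap.mem_ker.mpr (by simpa using ((Finset.mem_filter.mp hφ).2).1)))))
        ?_ ?_ ?_ ?_ ?_
      · intro ψ hψ
        simp only [mem_filter, mem_univ, true_and] at hψ ⊢
        constructor
        · rw [LinearMap.comp_apply, hmku₀, map_zero]
        · rw [LinearMap.comp_apply]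
          exact hψ
      · intro φ hφ
        simp only [mem_filter, mem_univ, true_and] at hφ ⊢
        exact hφ.2
      · intro ψ _
        apply LinearMap.ext
        intro x
        obtain ⟨y, rfl⟩ := W.mkQ_surjective x
        rfl
      · intro φ _
        exact Submodule.liftQ_mkQ _ _ _
      · intro ψ _
        rfl
    -- the weight identity
    have hkey : ∀ v : U, v ∉ W →
        (d + 2 - 1) / 2 ≤ wm m' (W.mkQ v) := by
      intro v hvW
      have hv0 : v ≠ 0 := fun e => hvW (e ▸ W.zero_mem)
      have hvu₀ : v + u₀ ≠ 0 := by
        intro e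
        have : v = u₀ := by
          have h2 : ∀ x : U, x + x = 0 := by
            intro x
            have := two_smul (ZMod 2) x
            rw [show (2 : ZMod 2) = 0 by decide, zero_smul] at this
            exact this.symm
          have := congrArg (fun t => t + u₀) e
          simpa [add_assoc, h2 u₀] using this
        exact hvW (this ▸ (hmemW u₀).mpr (Or.inr rfl))
      have hident : wm m v + wm m (v + u₀) = 2 * wm m' (W.mkQ v) + D := by
        have e1 : wm m v = ∑ φ, if (φ v = 1) then m φ else 0 := by
          rw [wm, Finset.sum_filter]
        have e2 : wm m (v + u₀) = ∑ φ, if (φ v + φ u₀ = 1) then m φ else 0 := by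
          rw [wm, Finset.sum_filter]
          exact Finset.sum_congr rfl fun φ _ => by rw [map_add]
        have e3 : wm m' (W.mkQ v) = ∑ φ, if (φ u₀ = 0 ∧ φ v = 1) then m φ else 0 := by
          rw [hb v, Finset.sum_filter]
        have e4 : D = ∑ φ, if (φ u₀ = 1) then m φ else 0 := by
          rw [hD, wm, Finset.sum_filter]
        rw [e1, e2, e3, e4, ← Finset.sum_add_distrib, Finset.mul_sum, ← Finset.sum_add_distrib]
        exact Finset.sum_congr rfl fun φ _ => pointG (φ v) (φ u₀) (m φ)
      have h1 : D ≤ wm m v := hmin v (by simp [hv0])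
      have h2 : D ≤ wm m (v + u₀) := hmin _ (by simp [hvu₀])
      omega
    -- put it together
    have hw' : ∀ x : U ⧸ W, x ≠ 0 → (d + 2 - 1) / 2 ≤ wm m' x := by
      intro x hx
      obtain ⟨v, rfl⟩ := W.mkQ_surjective x
      apply hkey
      intro hvW
      exact hx (by rwa [Submodule.mkQ_apply, Submodule.Quotient.mk_eq_zero])
    have hih := ih (U ⧸ W) hrank m' hm'0 ((d + 2 - 1) / 2) hw'
    have hsplit := Finset.sum_filter_add_sum_filter_not Finset.univ
      (fun φ : Module.Dual (ZMod 2) U => φ u₀ = 0) m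
    have hnot : univ.filter (fun φ : Module.Dual (ZMod 2) U => ¬ φ u₀ = 0)
        = univ.filter (fun φ : Module.Dual (ZMod 2) U => φ u₀ = 1) := by
      apply Finset.filter_congr
      intro φ _
      rcases z2cases (φ u₀) with h | h <;> simp [h]
    have hDval : ∑ φ ∈ univ.filter (fun φ : Module.Dual (ZMod 2) U => φ u₀ = 1), m φ = D := rfl
    rw [hnot, hDval, ← ha] at hsplit
    have := gb_rec k d
    have hmono : griesmerBound k ((d + 2 - 1) / 2) ≤ ∑ ψ, m' ψ := hih
    omega
open Finset



lemma pointS : ∀ (a b : ZMod 2) (n : ℕ),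
    (if a = 1 then n else 0) + (if b = 1 then n else 0) + (if a + b = 1 then n else 0)
      ≤ 2 * n := by
  intro a b n
  rcases z2cases a with rfl | rfl <;> rcases z2cases b with rfl | rfl <;>
    simp [show (0:ZMod 2) + 0 = 0 by decide, show (0:ZMod 2) + 1 = 1 by decide,
      show (1:ZMod 2) + 0 = 1 by decide, show (1:ZMod 2) + 1 = 0 by decide,
      show (0:ZMod 2) ≠ 1 by decide, show (1:ZMod 2) ≠ 0 by decide] <;> omega

lemma keyS : ∀ (k : ℕ) (U : Type u) [AddCommGroup U] [Module (ZMod 2) U]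
    [FiniteDimensional (ZMod 2) U] [Fintype (Module.Dual (ZMod 2) U)],
    2 ≤ k →
    Module.finrank (ZMod 2) U = k →
    ∀ (m : Module.Dual (ZMod 2) U → ℕ), m 0 = 0 →
    ∀ (d : ℕ), 1 ≤ d →
    (∀ u : U, u ≠ 0 → d ≤ wm m u) →
    (∑ φ, m φ) ≤ griesmerBound k d →
    ∀ (h : Module.Dual (ZMod 2) U), h ≠ 0 →
    (∀ u : U, wm m u % 4 = 2 * (h u).val) →
    False := by
  intro k
  induction k with
  | zero =>
    intro U _ _ _ _ hk2
    omega
  | succ k ih =>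
    intro U _ _ _ _ hk2 hU m hm0 d hd hw hn h hh hmod
    classical
    by_cases hkbase : k + 1 = 2
    · -- base case : dimension 2
      obtain ⟨u₁, hu₁⟩ := exists_one_of_ne_zero hh
      have hker : Module.finrank (ZMod 2) (LinearMap.ker h) + 1 = k + 1 := by
        rw [← hU]
        exact finrank_ker_add_one hh
      have hkerpos : 0 < Module.finrank (ZMod 2) (LinearMap.ker h) := by omega
      have hntk : Nontrivial (LinearMap.ker h) :=
        Module.nontrivial_of_finrank_pos (R := ZMod 2) hkerpos
      obtain ⟨x₂, hx₂⟩ := exists_ne (0 : LinearMap.ker h)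
      set u₂ : U := (x₂ : U) with hu₂def
      have hu₂0 : u₂ ≠ 0 := by
        intro e
        exact hx₂ (Subtype.ext e)
      have hu₂k : h u₂ = 0 := LinearMap.mem_ker.mp x₂.2
      have hu₁0 : u₁ ≠ 0 := by
        intro e
        rw [e, map_zero] at hu₁
        exact absurd hu₁ (by decide)
      have hu₃0 : u₁ + u₂ ≠ 0 := by
        intro e
        have : h (u₁ + u₂) = 0 := by rw [e, map_zero]
        rw [map_add, hu₁, hu₂k, add_zero] at this
        exact absurd this (by decide)
      -- the three weights
      have hb1 : d ≤ wm m u₁ := hw _ hu₁0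
      have hb2 : d ≤ wm m u₂ := hw _ hu₂0
      have hb3 : d ≤ wm m (u₁ + u₂) := hw _ hu₃0
      have hm1 : wm m u₁ % 4 = 2 := by
        have := hmod u₁
        rw [hu₁] at this
        simpa [show (1 : ZMod 2).val = 1 from rfl] using this
      have hm2 : wm m u₂ % 4 = 0 := by
        have := hmod u₂
        rw [hu₂k] at this
        simpa using this
      -- sum bound
      have hsum3 : wm m u₁ + wm m u₂ + wm m (u₁ + u₂) ≤ 2 * ∑ φ, m φ := by
        have e1 : wm m u₁ = ∑ φ, if (φ u₁ = 1) then m φ else 0 := by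
          rw [wm, Finset.sum_filter]
        have e2 : wm m u₂ = ∑ φ, if (φ u₂ = 1) then m φ else 0 := by
          rw [wm, Finset.sum_filter]
        have e3 : wm m (u₁ + u₂) = ∑ φ, if (φ u₁ + φ u₂ = 1) then m φ else 0 := by
          rw [wm, Finset.sum_filter]
          exact Finset.sum_congr rfl fun φ _ => by rw [map_add]
        rw [e1, e2, e3, ← Finset.sum_add_distrib, ← Finset.sum_add_distrib, Finset.mul_sum]
        exact Finset.sum_le_sum fun φ _ => pointS (φ u₁) (φ u₂) (m φ)
      have hgb2 : griesmerBound (k+1) d = (d + 1 - 1) / 1 + (d + 2 - 1) / 2 := by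
        have : k = 1 := by omega
        subst this
        rw [griesmerBound]
        rw [Finset.sum_range_succ, Finset.sum_range_one]
        norm_num
      rw [hgb2] at hn
      have hup : wm m u₁ + wm m u₂ ≤ 2 * d + 1 := by omega
      have hw1 : wm m u₁ ≤ d + 1 := by omega
      have hw2 : wm m u₂ ≤ d + 1 := by omega
      omega
    · -- inductive step : dimension k+1 ≥ 3
      have hk3 : 2 ≤ k := by omega
      set A := (d + 2 ^ k - 1) / 2 ^ k with hA
      have hA1 : 1 ≤ A := cdiv_pos (pow_pos (by norm_num) _) hd
      have hgbsplit : griesmerBound (k + 1) d = griesmerBound k d + A := gb_succ k d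
      -- column bound : for every nonzero functional v, m v + gb(k,d) ≤ ∑ m
      have hcol : ∀ v : Module.Dual (ZMod 2) U, v ≠ 0 →
          m v + griesmerBound k d ≤ ∑ φ, m φ := by
        intro v hv
        haveI : Finite (Module.Dual (ZMod 2) (LinearMap.ker v)) :=
          Module.finite_of_finite (ZMod 2)
        haveI : Fintype (Module.Dual (ZMod 2) (LinearMap.ker v)) := Fintype.ofFinite _
        have hrk : Module.finrank (ZMod 2) (LinearMap.ker v) = k := by
          have := finrank_ker_add_one (U := U) hv
          omega
        have hglb := griesmer_lb k (LinearMap.ker v) hrk (shorten m v) (shorten_zero m v) d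
          (fun x hx => by
            rw [shorten_w]
            exact hw _ (fun e => hx (Subtype.ext e)))
        have hss := shorten_sum m hv hm0
        omega
      have hGlb : griesmerBound (k + 1) d ≤ ∑ φ, m φ :=
        griesmer_lb (k + 1) U hU m hm0 d hw
      -- find a heavy column different from 0 and h
      have hex : ∃ v : Module.Dual (ZMod 2) U, v ≠ 0 ∧ v ≠ h ∧ A ≤ m v := by
        by_contra hcon
        push_neg at hcon
        have hcard : (univ : Finset (Module.Dual (ZMod 2) U)).card = 2 ^ (k + 1) := by
          rw [Finset.card_univ, Module.card_eq_pow_finrank (K := ZMod 2), ZMod.card,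
            Subspace.dual_finrank_eq, hU]
        have hsp := Finset.sum_filter_add_sum_filter_not Finset.univ
          (fun φ : Module.Dual (ZMod 2) U => φ = 0 ∨ φ = h) m
        have hs1 : univ.filter (fun φ : Module.Dual (ZMod 2) U => φ = 0 ∨ φ = h) = {0, h} := by
          ext φ
          simp [mem_filter, mem_insert, mem_singleton]
        have hs1sum : ∑ φ ∈ univ.filter
            (fun φ : Module.Dual (ZMod 2) U => φ = 0 ∨ φ = h), m φ = m h := by
          rw [hs1, Finset.sum_pair (fun e => hh e.symm), hm0, zero_add]
        have hs2card : (univ.filter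
            (fun φ : Module.Dual (ZMod 2) U => ¬(φ = 0 ∨ φ = h))).card = 2 ^ (k+1) - 2 := by
          have : univ.filter (fun φ : Module.Dual (ZMod 2) U => ¬(φ = 0 ∨ φ = h))
              = univ \ {0, h} := by
            ext φ
            simp only [mem_filter, mem_univ, true_and, mem_sdiff, mem_insert, mem_singleton]
          rw [this, Finset.card_sdiff_of_subset (by
            intro ψ hψ
            exact mem_univ ψ), hcard, Finset.card_pair (fun e => hh e.symm)]
        have hs2 : ∑ φ ∈ univ.filter
            (fun φ : Module.Dual (ZMod 2) U => ¬(φ = 0 ∨ φ = h)), m φ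
            ≤ (2 ^ (k+1) - 2) * (A - 1) := by
          rw [← hs2card]
          rw [← smul_eq_mul]
          apply Finset.sum_le_card_nsmul
          intro φ hφ
          simp only [mem_filter, mem_univ, true_and] at hφ
          push_neg at hφ
          have := hcon φ hφ.1 hφ.2
          omega
        have hmh : m h ≤ A := by
          have := hcol h hh
          omega
        have hcnt := gb_counting (show 2 ≤ k + 1 by omega) hd
        have hAA : (d + 2 ^ (k + 1 - 1) - 1) / 2 ^ (k + 1 - 1) = A := by
          rw [hA]
          norm_num
        rw [hAA] at hcnt
        omega
      obtain ⟨v, hv0, hvh, hvA⟩ := hex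
      -- shorten at v and recurse
      haveI : Finite (Module.Dual (ZMod 2) (LinearMap.ker v)) :=
        Module.finite_of_finite (ZMod 2)
      haveI : Fintype (Module.Dual (ZMod 2) (LinearMap.ker v)) := Fintype.ofFinite _
      have hrk : Module.finrank (ZMod 2) (LinearMap.ker v) = k := by
        have := finrank_ker_add_one (U := U) hv0
        omega
      have hss := shorten_sum m hv0 hm0
      have hh' : h.domRestrict (LinearMap.ker v) ≠ 0 := by
        intro e
        have hvan : ∀ x : U, v x = 0 → h x = 0 := by
          intro x hx
          have : h.domRestrict (LinearMap.ker v) ⟨x, LinearMap.mem_ker.mpr hx⟩ = 0 := by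
            rw [e]; rfl
          exact this
        rcases ker_le_ker_cases hv0 hvan with e0 | ev
        · exact hh e0
        · exact hvh ev.symm
      exact ih (LinearMap.ker v) hk3 hrk (shorten m v) (shorten_zero m v) d hd
        (fun x hx => by
          rw [shorten_w]
          exact hw _ (fun e => hx (Subtype.ext e)))
        (by omega)
        (h.domRestrict (LinearMap.ker v)) hh'
        (fun x => by
          rw [shorten_w]
          exact hmod (x : U))
open Finset

lemma wt_eq_card_one' {N : ℕ} (x : Fin N → ZMod 2) :
    wt x = (univ.filter fun i => x i = 1).card := by
  rw [wt]
  congr 1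
  apply Finset.filter_congr
  intro i _
  rcases z2cases (x i) with h | h <;> simp [h]

section Bridge
variable {N : ℕ} (C : Submodule (ZMod 2) (Fin N → ZMod 2))

def colF (j : Fin N) : Module.Dual (ZMod 2) ↥C := (LinearMap.proj j).comp C.subtype

lemma colF_apply (j : Fin N) (u : ↥C) : colF C j u = (↑u : Fin N → ZMod 2) j := rfl

variable [Fintype (Module.Dual (ZMod 2) ↥C)] [DecidableEq (Module.Dual (ZMod 2) ↥C)]

def multC : Module.Dual (ZMod 2) ↥C → ℕ := fun φ =>
  if φ = 0 then 0 else (univ.filter fun j => colF C j = φ).card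

lemma multC_zero : multC C 0 = 0 := by simp [multC]

lemma wm_multC (u : ↥C) : wm (multC C) u = wt (↑u : Fin N → ZMod 2) := by
  have main : ∀ φ : Module.Dual (ZMod 2) ↥C,
      (if φ u = 1 then multC C φ else 0)
      = ((univ.filter fun j => (↑u : Fin N → ZMod 2) j = 1).filter
          fun j => colF C j = φ).card := by
    intro φ
    by_cases hφu : φ u = 1
    · rw [if_pos hφu]
      have hφ0 : φ ≠ 0 := by
        intro e
        rw [e] at hφu
        simp at hφu
      have hsets : ((univ.filter fun j => (↑u : Fin N → ZMod 2) j = 1).filter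
          fun j => colF C j = φ) = univ.filter fun j => colF C j = φ := by
        ext j
        simp only [mem_filter, mem_univ, true_and]
        constructor
        · exact fun hc => hc.2
        · intro hc
          refine ⟨?_, hc⟩
          rw [← colF_apply C j u, hc]
          exact hφu
      rw [hsets, multC, if_neg hφ0]
    · rw [if_neg hφu]
      symm
      rw [Finset.card_eq_zero, Finset.eq_empty_iff_forall_notMem]
      intro j hj
      simp only [mem_filter, mem_univ, true_and] at hj
      apply hφu
      rw [← hj.2, colF_apply C j u]
      exact hj.1
  calc wm (multC C) u = ∑ φ, if φ u = 1 then multC C φ else 0 := by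
        rw [wm, Finset.sum_filter]
    _ = ∑ φ : Module.Dual (ZMod 2) ↥C,
        ((univ.filter fun j => (↑u : Fin N → ZMod 2) j = 1).filter
          fun j => colF C j = φ).card := Finset.sum_congr rfl fun φ _ => main φ
    _ = (univ.filter fun j => (↑u : Fin N → ZMod 2) j = 1).card :=
        (Finset.card_eq_sum_card_fiberwise fun _ _ => mem_univ _).symm
    _ = wt ((↑u : Fin N → ZMod 2)) := (wt_eq_card_one' _).symm

lemma sum_multC : ∑ φ, multC C φ ≤ N := by
  have hsp := Finset.sum_filter_add_sum_filter_not
    (univ : Finset (Module.Dual (ZMod 2) ↥C)) (fun φ => φ = 0) (multC C)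
  have hz : ∑ φ ∈ univ.filter (fun φ : Module.Dual (ZMod 2) ↥C => φ = 0), multC C φ = 0 := by
    apply Finset.sum_eq_zero
    intro φ hφ
    simp only [mem_filter, mem_univ, true_and] at hφ
    rw [hφ]
    exact multC_zero C
  have hrest : ∑ φ ∈ univ.filter (fun φ : Module.Dual (ZMod 2) ↥C => ¬ φ = 0), multC C φ
      = (univ.filter (fun j : Fin N => colF C j ≠ 0)).card := by
    rw [Finset.card_eq_sum_card_fiberwise (f := colF C)
      (t := univ.filter (fun φ : Module.Dual (ZMod 2) ↥C => ¬ φ = 0))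
      (by
        intro j hj
        simp only [mem_coe, mem_filter, mem_univ, true_and] at hj ⊢
        exact hj)]
    apply Finset.sum_congr rfl
    intro φ hφ
    simp only [mem_filter, mem_univ, true_and] at hφ
    have hsets : ((univ.filter fun j : Fin N => colF C j ≠ 0).filter
        fun j => colF C j = φ) = univ.filter fun j => colF C j = φ := by
      ext j
      simp only [mem_filter, mem_univ, true_and]
      constructor
      · exact fun hc => hc.2
      · intro hc
        refine ⟨?_, hc⟩
        rw [hc]
        exact hφ
    rw [multC, if_neg hφ, hsets]
  have hle : (univ.filter (fun j : Fin N => colF C j ≠ 0)).card ≤ N := by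
    calc _ ≤ (univ : Finset (Fin N)).card := Finset.card_filter_le _ _
      _ = N := by simp
  omega

end Bridge
open Finset

lemma wt_zero {N : ℕ} : wt (0 : Fin N → ZMod 2) = 0 := by simp [wt]

lemma wt_add_ov {N : ℕ} (x y : Fin N → ZMod 2) :
    wt (x + y) + 2 * (univ.filter fun i => x i = 1 ∧ y i = 1).card = wt x + wt y := by
  rw [wt_eq_card_one', wt_eq_card_one', wt_eq_card_one']
  rw [Finset.card_filter, Finset.card_filter, Finset.card_filter, Finset.card_filter,
    Finset.mul_sum, ← Finset.sum_add_distrib, ← Finset.sum_add_distrib]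
  refine Finset.sum_congr rfl fun i _ => ?_
  have hcoe : (x + y) i = x i + y i := rfl
  rw [hcoe]
  have key : ∀ a b : ZMod 2,
      (if a + b = 1 then (1:ℕ) else 0) + 2 * (if a = 1 ∧ b = 1 then 1 else 0)
        = (if a = 1 then 1 else 0) + (if b = 1 then 1 else 0) := by decide
  exact key _ _

lemma dot_cast {N : ℕ} (x y : Fin N → ZMod 2) :
    ∑ i, x i * y i = (((univ.filter fun i => x i = 1 ∧ y i = 1).card : ℕ) : ZMod 2) := by
  rw [Finset.natCast_card_filter]
  have key : ∀ a b : ZMod 2, a * b = if a = 1 ∧ b = 1 then 1 else 0 := by decide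
  exact Finset.sum_congr rfl fun i _ => key _ _

lemma wt_cast {N : ℕ} (x : Fin N → ZMod 2) : ((wt x : ℕ) : ZMod 2) = ∑ i, x i := by
  rw [wt_eq_card_one', Finset.natCast_card_filter]
  have key : ∀ a : ZMod 2, (if a = 1 then (1 : ZMod 2) else 0) = a := by decide
  exact Finset.sum_congr rfl fun i _ => key _

theorem stmt3 (N k D : ℕ) (hk : 3 ≤ k) (hD : 1 ≤ D)
    (C : Submodule (ZMod 2) (Fin N → ZMod 2))
    (hdim : Module.finrank (ZMod 2) C = k)
    (hmd : HasMinDist C D)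
    (hg : N = griesmerBound k D) :
    SelfOrthogonal C ↔ ∀ x ∈ C, 4 ∣ wt x := by
  classical
  constructor
  · intro hso
    have heven : ∀ x ∈ C, 2 ∣ wt x := by
      intro x hx
      have h0 : ((wt x : ℕ) : ZMod 2) = 0 := by
        rw [wt_cast]
        have key : ∀ a : ZMod 2, a = a * a := by decide
        calc ∑ i, x i = ∑ i, x i * x i := Finset.sum_congr rfl fun i _ => key _
          _ = 0 := hso x hx x hx
      exact (ZMod.natCast_eq_zero_iff _ 2).mp h0
    have hovev : ∀ x ∈ C, ∀ y ∈ C,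
        2 ∣ (univ.filter fun i => x i = 1 ∧ y i = 1).card := by
      intro x hx y hy
      have h0 : (((univ.filter fun i => x i = 1 ∧ y i = 1).card : ℕ) : ZMod 2) = 0 := by
        rw [← dot_cast]
        exact hso x hx y hy
      exact (ZMod.natCast_eq_zero_iff _ 2).mp h0
    intro x hx
    by_contra h4
    have hx2 : wt x % 4 = 2 := by
      have := heven x hx
      omega
    haveI : Finite (Module.Dual (ZMod 2) ↥C) := Module.finite_of_finite (ZMod 2)
    haveI : Fintype (Module.Dual (ZMod 2) ↥C) := Fintype.ofFinite _
    have hq_add : ∀ u v : ↥C,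
        (if wt ((↑(u + v) : Fin N → ZMod 2)) % 4 = 2 then (1 : ZMod 2) else 0)
        = (if wt ((↑u : Fin N → ZMod 2)) % 4 = 2 then (1 : ZMod 2) else 0)
          + (if wt ((↑v : Fin N → ZMod 2)) % 4 = 2 then (1 : ZMod 2) else 0) := by
      intro u v
      have hcoe : ((↑(u + v) : Fin N → ZMod 2)) = ↑u + ↑v := rfl
      rw [hcoe]
      have h2u := heven ↑u u.2
      have h2v := heven ↑v v.2
      obtain ⟨o, ho⟩ := hovev ↑u u.2 ↑v v.2
      have hid := wt_add_ov (↑u : Fin N → ZMod 2) ↑v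
      by_cases c1 : wt (↑u : Fin N → ZMod 2) % 4 = 2 <;>
        by_cases c2 : wt (↑v : Fin N → ZMod 2) % 4 = 2
      · have hnc : ¬ (wt ((↑u + ↑v) : Fin N → ZMod 2) % 4 = 2) := by omega
        rw [if_neg hnc, if_pos c1, if_pos c2]; decide
      · have hc : wt ((↑u + ↑v) : Fin N → ZMod 2) % 4 = 2 := by omega
        rw [if_pos hc, if_pos c1, if_neg c2]; decide
      · have hc : wt ((↑u + ↑v) : Fin N → ZMod 2) % 4 = 2 := by omega
        rw [if_pos hc, if_neg c1, if_pos c2]; decide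
      · have hnc : ¬ (wt ((↑u + ↑v) : Fin N → ZMod 2) % 4 = 2) := by omega
        rw [if_neg hnc, if_neg c1, if_neg c2]; decide
    set q : Module.Dual (ZMod 2) ↥C :=
      { toFun := fun u => if wt ((↑u : Fin N → ZMod 2)) % 4 = 2 then (1 : ZMod 2) else 0,
        map_add' := hq_add,
        map_smul' := by
          intro c u
          rcases z2cases c with rfl | rfl
          · simp [zero_smul, wt_zero]
          · simp } with hqdef
    have hqval : ∀ u : ↥C,
        q u = if wt ((↑u : Fin N → ZMod 2)) % 4 = 2 then (1 : ZMod 2) else 0 := fun _ => rfl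
    have hq0 : q ≠ 0 := by
      intro e
      have h1 : q ⟨x, hx⟩ = 1 := by
        rw [hqval, if_pos hx2]
      rw [e] at h1
      simp at h1
    refine keyS k ↥C (by omega) hdim (multC C) (multC_zero C) D hD ?_ ?_ q hq0 ?_
    · intro u hu
      rw [wm_multC]
      refine hmd.2 ↑u u.2 ?_
      intro e
      exact hu (Subtype.ext e)
    · rw [← hg]
      exact sum_multC C
    · intro u
      rw [wm_multC, hqval]
      by_cases hc : wt (↑u : Fin N → ZMod 2) % 4 = 2
      · rw [hc]
        decide
      · have h2 : 2 ∣ wt (↑u : Fin N → ZMod 2) := heven ↑u u.2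
        have h0 : wt (↑u : Fin N → ZMod 2) % 4 = 0 := by omega
        rw [if_neg hc, h0]
        decide
  · intro hde x hx y hy
    have hxy := C.add_mem hx hy
    have hid := wt_add_ov x y
    have h4x := hde x hx
    have h4y := hde y hy
    have h4xy := hde _ hxy
    have hov2 : 2 ∣ (univ.filter fun i => x i = 1 ∧ y i = 1).card := by omega
    rw [dot_cast x y]
    exact (ZMod.natCast_eq_zero_iff _ 2).mpr hov2
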